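/- arXiv:1610.01271 — 3 statements merged into one kernel-verified Lean document; each statement's English description precedes it below -/
import Mathlib

section
/- Let T, A₁, A₂ be square-integrable real random variables and let κ be a random variable taking values in {1, 2}, all on a common probability space, such that the pair (A₁, A₂) is independent of the pair (T, κ). Suppose p_j := ℙ(κ = j) > 0 for j = 1, 2, and write m_j := E[T · 1{κ = j}]/p_j. Then Σ_{j=1}^{2} p_j · E[(A_j − T)² · 1{κ = j}]/p_j = Var(T) − p₁ p₂ (m₁ − m₂)² + Σ_{j=1}^{2} p_j · (Var(A_j) + (E[A_j] − m_j)²). -/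
open MeasureTheory ProbabilityTheory

/-- the deterministic backbone of Proposition 1: the decomposition of the
splitting error into the purity term, the heterogeneity term, and variance/bias terms. -/
theorem splitting_error_decomposition
    {Ω : Type*} [MeasurableSpace Ω] (P : Measure Ω) [IsProbabilityMeasure P]
    (T A₁ A₂ : Ω → ℝ) (κ : Ω → ℕ)
    (hT : MemLp T 2 P) (hA₁ : MemLp A₁ 2 P) (hA₂ : MemLp A₂ 2 P)
    (hκmeas : Measurable κ) (hκval : ∀ ω, κ ω = 1 ∨ κ ω = 2)
    (hindep : IndepFun (fun ω => (A₁ ω, A₂ ω)) (fun ω => (T ω, κ ω)) P)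
    (p₁ p₂ m₁ m₂ : ℝ)
    (hp₁ : p₁ = (P {ω | κ ω = 1}).toReal) (hp₂ : p₂ = (P {ω | κ ω = 2}).toReal)
    (hp₁pos : 0 < p₁) (hp₂pos : 0 < p₂)
    (hm₁ : m₁ = (∫ ω, T ω * (if κ ω = 1 then 1 else 0) ∂P) / p₁)
    (hm₂ : m₂ = (∫ ω, T ω * (if κ ω = 2 then 1 else 0) ∂P) / p₂) :
    p₁ * ((∫ ω, (A₁ ω - T ω) ^ 2 * (if κ ω = 1 then 1 else 0) ∂P) / p₁)
        + p₂ * ((∫ ω, (A₂ ω - T ω) ^ 2 * (if κ ω = 2 then 1 else 0) ∂P) / p₂)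
      = variance T P - p₁ * p₂ * (m₁ - m₂) ^ 2
        + (p₁ * (variance A₁ P + ((∫ ω, A₁ ω ∂P) - m₁) ^ 2)
          + p₂ * (variance A₂ P + ((∫ ω, A₂ ω ∂P) - m₂) ^ 2)) := by
  -- measurability of the indicator-of-`κ = j` functions
  have hImeas : ∀ j : ℕ, Measurable (fun ω => if κ ω = j then (1 : ℝ) else 0) := by
    intro j
    exact Measurable.ite (hκmeas (measurableSet_singleton j)) measurable_const measurable_const
  -- multiplication by the indicator preserves integrability
  have hmulI : ∀ (f : Ω → ℝ) (j : ℕ), Integrable f P →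
      Integrable (fun ω => f ω * (if κ ω = j then 1 else 0)) P := by
    intro f j hf
    refine hf.norm.mono' (hf.1.mul (hImeas j).aestronglyMeasurable) ?_
    filter_upwards with ω
    by_cases h : κ ω = j <;> simp [h, Real.norm_eq_abs, abs_nonneg]
  have hTint : Integrable T P := hT.integrable one_le_two
  have hA₁int : Integrable A₁ P := hA₁.integrable one_le_two
  have hA₂int : Integrable A₂ P := hA₂.integrable one_le_two
  have hTsq : Integrable (fun ω => T ω ^ 2) P := hT.integrable_sq
  have hA₁sq : Integrable (fun ω => A₁ ω ^ 2) P := hA₁.integrable_sq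
  have hA₂sq : Integrable (fun ω => A₂ ω ^ 2) P := hA₂.integrable_sq
  -- integral of the indicator is p_j
  have hintI : ∀ j : ℕ, (∫ ω, (if κ ω = j then (1 : ℝ) else 0) ∂P)
      = (P {ω | κ ω = j}).toReal := by
    intro j
    have h1 : ∀ ω, (if κ ω = j then (1 : ℝ) else 0)
        = Set.indicator {ω | κ ω = j} (fun _ => (1 : ℝ)) ω := by
      intro ω
      by_cases h : κ ω = j <;> simp [Set.indicator_apply, h]
    have hms : MeasurableSet {ω | κ ω = j} := hκmeas (measurableSet_singleton j)
    simp_rw [h1]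
    rw [integral_indicator hms]
    simp
    rfl
  -- independence consequences
  have hψmeas : ∀ j : ℕ, Measurable (fun x : ℝ × ℕ => if x.2 = j then (1 : ℝ) else 0) := by
    intro j
    exact Measurable.ite (measurable_snd (measurableSet_singleton j)) measurable_const
      measurable_const
  -- independence of A_j² and the indicator
  have hIndSq : ∀ j : ℕ, ∀ g : Ω → ℝ, MemLp g 2 P →
      IndepFun (fun ω => g ω ^ 2) (fun ω => if κ ω = j then (1 : ℝ) else 0) P → True := fun _ _ _ _ => trivial
  have key1 : ∀ j : ℕ,
      (∫ ω, A₁ ω ^ 2 * (if κ ω = j then 1 else 0) ∂P)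
        = (∫ ω, A₁ ω ^ 2 ∂P) * (P {ω | κ ω = j}).toReal := by
    intro j
    have hind : IndepFun (fun ω => A₁ ω ^ 2) (fun ω => if κ ω = j then (1 : ℝ) else 0) P :=
      hindep.comp (φ := fun x : ℝ × ℝ => x.1 ^ 2)
        (ψ := fun x : ℝ × ℕ => if x.2 = j then (1 : ℝ) else 0)
        (measurable_fst.pow_const 2) (hψmeas j)
    rw [hind.integral_fun_mul_eq_mul_integral hA₁sq.1 (hImeas j).aestronglyMeasurable, hintI j]
  have key2 : ∀ j : ℕ,
      (∫ ω, A₂ ω ^ 2 * (if κ ω = j then 1 else 0) ∂P)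
        = (∫ ω, A₂ ω ^ 2 ∂P) * (P {ω | κ ω = j}).toReal := by
    intro j
    have hind : IndepFun (fun ω => A₂ ω ^ 2) (fun ω => if κ ω = j then (1 : ℝ) else 0) P :=
      hindep.comp (φ := fun x : ℝ × ℝ => x.2 ^ 2)
        (ψ := fun x : ℝ × ℕ => if x.2 = j then (1 : ℝ) else 0)
        (measurable_snd.pow_const 2) (hψmeas j)
    rw [hind.integral_fun_mul_eq_mul_integral hA₂sq.1 (hImeas j).aestronglyMeasurable, hintI j]
  -- independence of A_j and T * indicator
  have hindA₁TI : ∀ j : ℕ,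
      IndepFun A₁ (fun ω => T ω * (if κ ω = j then (1 : ℝ) else 0)) P := by
    intro j
    exact hindep.comp (φ := fun x : ℝ × ℝ => x.1)
      (ψ := fun x : ℝ × ℕ => x.1 * (if x.2 = j then (1 : ℝ) else 0))
      measurable_fst (measurable_fst.mul (hψmeas j))
  have hindA₂TI : ∀ j : ℕ,
      IndepFun A₂ (fun ω => T ω * (if κ ω = j then (1 : ℝ) else 0)) P := by
    intro j
    exact hindep.comp (φ := fun x : ℝ × ℝ => x.2)
      (ψ := fun x : ℝ × ℕ => x.1 * (if x.2 = j then (1 : ℝ) else 0))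
      measurable_snd (measurable_fst.mul (hψmeas j))
  have hTIint : ∀ j : ℕ, Integrable (fun ω => T ω * (if κ ω = j then (1 : ℝ) else 0)) P :=
    fun j => hmulI T j hTint
  have hA₁TIint : ∀ j : ℕ,
      Integrable (fun ω => A₁ ω * (T ω * (if κ ω = j then (1 : ℝ) else 0))) P :=
    fun j => (hindA₁TI j).integrable_mul hA₁int (hTIint j)
  have hA₂TIint : ∀ j : ℕ,
      Integrable (fun ω => A₂ ω * (T ω * (if κ ω = j then (1 : ℝ) else 0))) P :=
    fun j => (hindA₂TI j).integrable_mul hA₂int (hTIint j)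
  have keyAT₁ : ∀ j : ℕ,
      (∫ ω, A₁ ω * (T ω * (if κ ω = j then 1 else 0)) ∂P)
        = (∫ ω, A₁ ω ∂P) * (∫ ω, T ω * (if κ ω = j then 1 else 0) ∂P) :=
    fun j => (hindA₁TI j).integral_fun_mul_eq_mul_integral hA₁int.1 (hTIint j).1
  have keyAT₂ : ∀ j : ℕ,
      (∫ ω, A₂ ω * (T ω * (if κ ω = j then 1 else 0)) ∂P)
        = (∫ ω, A₂ ω ∂P) * (∫ ω, T ω * (if κ ω = j then 1 else 0) ∂P) :=
    fun j => (hindA₂TI j).integral_fun_mul_eq_mul_integral hA₂int.1 (hTIint j).1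
  -- expansion of the squared error integrals
  have expand : ∀ (g : Ω → ℝ) (j : ℕ), MemLp g 2 P →
      Integrable (fun ω => g ω * (T ω * (if κ ω = j then (1 : ℝ) else 0))) P →
      (∫ ω, (g ω - T ω) ^ 2 * (if κ ω = j then 1 else 0) ∂P)
        = (∫ ω, g ω ^ 2 * (if κ ω = j then 1 else 0) ∂P)
          - 2 * (∫ ω, g ω * (T ω * (if κ ω = j then 1 else 0)) ∂P)
          + (∫ ω, T ω ^ 2 * (if κ ω = j then 1 else 0) ∂P) := by
    intro g j hg hgTI
    have h1 : (fun ω => (g ω - T ω) ^ 2 * (if κ ω = j then (1 : ℝ) else 0))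
        = fun ω => (g ω ^ 2 * (if κ ω = j then 1 else 0)
            - 2 * (g ω * (T ω * (if κ ω = j then 1 else 0))))
          + T ω ^ 2 * (if κ ω = j then 1 else 0) := by
      funext ω; ring
    have hf1 : Integrable (fun ω => g ω ^ 2 * (if κ ω = j then (1 : ℝ) else 0)
        - 2 * (g ω * (T ω * (if κ ω = j then 1 else 0)))) P :=
      (hmulI _ j hg.integrable_sq).sub (hgTI.const_mul 2)
    have hf2 : Integrable (fun ω => T ω ^ 2 * (if κ ω = j then (1 : ℝ) else 0)) P :=
      hmulI _ j hTsq
    rw [h1, integral_add hf1 hf2,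
      integral_sub (hmulI _ j hg.integrable_sq) (hgTI.const_mul 2), integral_const_mul]
  -- splitting of total integrals across the two cells
  have hsplit : ∀ f : Ω → ℝ, Integrable f P →
      (∫ ω, f ω * (if κ ω = 1 then 1 else 0) ∂P) + (∫ ω, f ω * (if κ ω = 2 then 1 else 0) ∂P)
        = ∫ ω, f ω ∂P := by
    intro f hf
    rw [← integral_add (hmulI f 1 hf) (hmulI f 2 hf)]
    refine integral_congr_ae (Filter.Eventually.of_forall fun ω => ?_)
    rcases hκval ω with h | h <;> simp [h]
  have hpsum : p₁ + p₂ = 1 := by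
    have := hsplit (fun _ => (1 : ℝ)) (integrable_const 1)
    simp only [one_mul] at this
    rw [hintI 1, hintI 2] at this
    simp at this
    rw [hp₁, hp₂, this]
  have hTI₁ : (∫ ω, T ω * (if κ ω = 1 then 1 else 0) ∂P) = m₁ * p₁ := by
    rw [hm₁]; field_simp
  have hTI₂ : (∫ ω, T ω * (if κ ω = 2 then 1 else 0) ∂P) = m₂ * p₂ := by
    rw [hm₂]; field_simp
  have hTmean : (∫ ω, T ω ∂P) = m₁ * p₁ + m₂ * p₂ := by
    rw [← hsplit T hTint, hTI₁, hTI₂]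
  have hTsqsum : (∫ ω, T ω ^ 2 * (if κ ω = 1 then 1 else 0) ∂P)
      + (∫ ω, T ω ^ 2 * (if κ ω = 2 then 1 else 0) ∂P) = ∫ ω, T ω ^ 2 ∂P :=
    hsplit (fun ω => T ω ^ 2) hTsq
  -- rewrite the left-hand side
  rw [mul_comm p₁, div_mul_cancel₀ _ (ne_of_gt hp₁pos), mul_comm p₂,
    div_mul_cancel₀ _ (ne_of_gt hp₂pos)]
  rw [expand A₁ 1 hA₁ (hA₁TIint 1), expand A₂ 2 hA₂ (hA₂TIint 2)]
  rw [key1 1, key2 2, ← hp₁, ← hp₂, keyAT₁ 1, keyAT₂ 2, hTI₁, hTI₂]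
  rw [variance_eq_sub hT, variance_eq_sub hA₁, variance_eq_sub hA₂, hTmean]
  linear_combination hTsqsum + (m₁ ^ 2 * p₁ + m₂ ^ 2 * p₂) * hpsum
end

section
/- Let (X₁, O₁), …, (Xₙ, Oₙ) be i.i.d. random pairs with values in a product 𝒳 × 𝒪 of measurable spaces, let ψ : 𝒪 → ℝ^k be bounded measurable, and let M : 𝒳 → ℝ^k be bounded measurable with M(X₁) = E[ψ(O₁) | X₁] almost surely. Let α₁, …, αₙ : 𝒳ⁿ → [0, ∞) be measurable functions with Σᵢ αᵢ(x₁, …, xₙ) = 1 for all (x₁, …, xₙ) ∈ 𝒳ⁿ, and write αᵢ := αᵢ(X₁, …, Xₙ). Then: (i) E[Σᵢ αᵢ (ψ(Oᵢ) − M(Xᵢ))] = 0; and (ii) if V ≥ 0 satisfies E[‖ψ(O₁) − M(X₁)‖₂² | X₁] ≤ V almost surely, then E[‖Σᵢ αᵢ (ψ(Oᵢ) − M(Xᵢ))‖₂²] ≤ V. -/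
open MeasureTheory ProbabilityTheory

section Aux

lemma hw_abs_coord_le {k : ℕ} (v : EuclideanSpace ℝ (Fin k)) (j : Fin k) : |v j| ≤ ‖v‖ := by
  rw [EuclideanSpace.norm_eq, ← Real.sqrt_sq_eq_abs]
  apply Real.sqrt_le_sqrt
  calc (v j) ^ 2 = ‖v j‖ ^ 2 := by rw [Real.norm_eq_abs, sq_abs]
    _ ≤ ∑ i, ‖v i‖ ^ 2 :=
      Finset.single_le_sum (f := fun i => ‖v i‖ ^ 2) (fun i _ => by positivity)
        (Finset.mem_univ j)

lemma hw_condexp_clm_comm {Ω : Type*} {m m0 : MeasurableSpace Ω} (hm : m ≤ m0)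
    (P : Measure Ω) [IsFiniteMeasure P]
    {E F : Type*} [NormedAddCommGroup E] [NormedSpace ℝ E] [CompleteSpace E]
    [NormedAddCommGroup F] [NormedSpace ℝ F] [CompleteSpace F]
    (L : E →L[ℝ] F) (f : Ω → E) (hf : Integrable f P) :
    (fun ω => L ((P[f|m]) ω)) =ᵐ[P] P[fun ω => L (f ω)|m] := by
  have hLint : Integrable (fun ω => L ((P[f|m]) ω)) P :=
    L.integrable_comp integrable_condExp
  refine ae_eq_condExp_of_forall_setIntegral_eq hm (L.integrable_comp hf)
    (fun s _ _ => hLint.integrableOn) (fun s hs _ => ?_) ?_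
  · rw [L.integral_comp_comm integrable_condExp.integrableOn,
      setIntegral_condExp hm hf hs, L.integral_comp_comm hf.integrableOn]
  · exact (L.continuous.comp_stronglyMeasurable stronglyMeasurable_condExp).aestronglyMeasurable

lemma hw_integral_mul_condexp {Ω : Type*} {m m0 : MeasurableSpace Ω} (hm : m ≤ m0)
    (P : Measure Ω) [IsProbabilityMeasure P] (g f : Ω → ℝ)
    (hg : StronglyMeasurable[m] g) (c : ℝ) (hgb : ∀ ω, |g ω| ≤ c)
    (hf : Integrable f P) :
    ∫ ω, g ω * f ω ∂P = ∫ ω, g ω * (P[f|m]) ω ∂P := by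
  have h := condExp_stronglyMeasurable_mul_of_bound hm hg hf c
    (ae_of_all _ fun ω => by simpa [Real.norm_eq_abs] using hgb ω)
  have h1 : ∫ ω, (g * f) ω ∂P = ∫ ω, (P[g * f|m]) ω ∂P := (integral_condExp hm).symm
  calc ∫ ω, g ω * f ω ∂P = ∫ ω, (P[g * f|m]) ω ∂P := h1
    _ = ∫ ω, g ω * (P[f|m]) ω ∂P := integral_congr_ae (h.mono fun ω hω => hω)

lemma hw_indep_fubini {Ω : Type*} [MeasurableSpace Ω] (P : Measure Ω) [IsProbabilityMeasure P]
    {β γ : Type*} [MeasurableSpace β] [MeasurableSpace γ]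
    {E : Type*} [NormedAddCommGroup E] [NormedSpace ℝ E]
    [MeasurableSpace E] [BorelSpace E] [SecondCountableTopology E]
    (Z : Ω → β) (Y : Ω → γ) (hZ : Measurable Z) (hY : Measurable Y)
    (hindep : IndepFun Z Y P)
    (H : β × γ → E) (hH : Measurable H) (C : ℝ) (hHb : ∀ p, ‖H p‖ ≤ C) :
    ∫ ω, H (Z ω, Y ω) ∂P = ∫ z, ∫ y, H (z, y) ∂(P.map Y) ∂(P.map Z) := by
  have hmap : P.map (fun ω => (Z ω, Y ω)) = (P.map Z).prod (P.map Y) :=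
    (indepFun_iff_map_prod_eq_prod_map_map hZ.aemeasurable hY.aemeasurable).1 hindep
  have h1 : IsProbabilityMeasure (P.map Z) := Measure.isProbabilityMeasure_map hZ.aemeasurable
  have h2 : IsProbabilityMeasure (P.map Y) := Measure.isProbabilityMeasure_map hY.aemeasurable
  have hint : Integrable H ((P.map Z).prod (P.map Y)) :=
    Integrable.mono' (integrable_const C) hH.aestronglyMeasurable (ae_of_all _ hHb)
  rw [← integral_map (hZ.prodMk hY).aemeasurable hH.aestronglyMeasurable, hmap,
    integral_prod _ hint]

lemma hw_indep_fubini_integrable {Ω : Type*} [MeasurableSpace Ω] (P : Measure Ω)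
    [IsProbabilityMeasure P]
    {β γ : Type*} [MeasurableSpace β] [MeasurableSpace γ]
    {E : Type*} [NormedAddCommGroup E] [NormedSpace ℝ E]
    [MeasurableSpace E] [BorelSpace E] [SecondCountableTopology E]
    (Z : Ω → β) (Y : Ω → γ) (hZ : Measurable Z) (hY : Measurable Y)
    (H : β × γ → E) (hH : Measurable H) (C : ℝ) (hHb : ∀ p, ‖H p‖ ≤ C) :
    Integrable (fun z => ∫ y, H (z, y) ∂(P.map Y)) (P.map Z) := by
  have h1 : IsProbabilityMeasure (P.map Z) := Measure.isProbabilityMeasure_map hZ.aemeasurable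
  have h2 : IsProbabilityMeasure (P.map Y) := Measure.isProbabilityMeasure_map hY.aemeasurable
  have hint : Integrable H ((P.map Z).prod (P.map Y)) :=
    Integrable.mono' (integrable_const C) hH.aestronglyMeasurable (ae_of_all _ hHb)
  exact hint.integral_prod_left

def hwReco {𝓧 𝓞 : Type*} {n : ℕ} (i : Fin n)
    (p : ({l : Fin n // l ≠ i} → 𝓧 × 𝓞) × (𝓧 × 𝓞)) (l : Fin n) : 𝓧 :=
  if h : l = i then p.2.1 else (p.1 ⟨l, h⟩).1

lemma hwReco_meas {𝓧 𝓞 : Type*} [MeasurableSpace 𝓧] [MeasurableSpace 𝓞] {n : ℕ} (i : Fin n) :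
    Measurable (hwReco (𝓧 := 𝓧) (𝓞 := 𝓞) (n := n) i) := by
  apply measurable_pi_lambda
  intro l
  unfold hwReco
  by_cases h : l = i
  · simp only [dif_pos h]; exact measurable_fst.comp measurable_snd
  · simp only [dif_neg h]
    exact measurable_fst.comp ((measurable_pi_apply _).comp measurable_fst)

lemma hwReco_eq {𝓧 𝓞 : Type*} {n : ℕ} (i : Fin n) (x : Fin n → 𝓧) (o : Fin n → 𝓞) :
    hwReco i (fun l => (x l.1, o l.1), (x i, o i)) = x := by
  funext l
  unfold hwReco
  by_cases h : l = i
  · rw [dif_pos h, h]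
  · rw [dif_neg h]

end Aux

/-- honest forest weights: the weighted sum of centered scores has mean
zero, and its second moment is controlled by the worst-case conditional second moment of
the centered score. -/
theorem honest_weights_centered_score_bound
    {𝓧 𝓞 : Type*} [MeasurableSpace 𝓧] [MeasurableSpace 𝓞]
    {Ω : Type*} [MeasurableSpace Ω] (P : Measure Ω) [IsProbabilityMeasure P]
    (n k : ℕ) (hn : 1 ≤ n)
    (X : Fin n → Ω → 𝓧) (O : Fin n → Ω → 𝓞)
    (hmeas : ∀ i, Measurable (fun ω => (X i ω, O i ω)))
    (hindep : iIndepFun (fun i ω => (X i ω, O i ω)) P)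
    (hident : ∀ i j, Measure.map (fun ω => (X i ω, O i ω)) P
        = Measure.map (fun ω => (X j ω, O j ω)) P)
    (ψ : 𝓞 → EuclideanSpace ℝ (Fin k)) (hψmeas : Measurable ψ)
    (Cψ : ℝ) (hψbdd : ∀ o, ‖ψ o‖ ≤ Cψ)
    (M : 𝓧 → EuclideanSpace ℝ (Fin k)) (hMmeas : Measurable M)
    (CM : ℝ) (hMbdd : ∀ x, ‖M x‖ ≤ CM)
    (hM : (fun ω => M (X ⟨0, hn⟩ ω)) =ᵐ[P]
        P[(fun ω => ψ (O ⟨0, hn⟩ ω)) |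
          MeasurableSpace.comap (X ⟨0, hn⟩) inferInstance])
    (α : Fin n → (Fin n → 𝓧) → ℝ)
    (hαmeas : ∀ i, Measurable (α i))
    (hαnn : ∀ i v, 0 ≤ α i v)
    (hαsum : ∀ v, ∑ i, α i v = 1) :
    (∫ ω, (∑ i, α i (fun j => X j ω) • (ψ (O i ω) - M (X i ω))) ∂P) = 0
      ∧ ∀ V : ℝ, 0 ≤ V →
          (∀ᵐ ω ∂P,
            (P[(fun ω' => ‖ψ (O ⟨0, hn⟩ ω') - M (X ⟨0, hn⟩ ω')‖ ^ 2) |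
              MeasurableSpace.comap (X ⟨0, hn⟩) inferInstance]) ω ≤ V) →
          (∫ ω, ‖∑ i, α i (fun j => X j ω) • (ψ (O i ω) - M (X i ω))‖ ^ 2 ∂P) ≤ V := by
  classical
  set i0 : Fin n := ⟨0, hn⟩ with hi0
  have hXmeas : ∀ i, Measurable (X i) := fun i => measurable_fst.comp (hmeas i)
  have hOmeas : ∀ i, Measurable (O i) := fun i => measurable_snd.comp (hmeas i)
  have hm : MeasurableSpace.comap (X i0) inferInstance ≤ (inferInstance : MeasurableSpace Ω) :=
    (hXmeas i0).comap_le
  have hXm : Measurable[MeasurableSpace.comap (X i0) inferInstance] (X i0) :=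
    fun s hs => ⟨s, hs, rfl⟩
  -- the centered score on the sample space 𝓧 × 𝓞
  set D : 𝓧 × 𝓞 → EuclideanSpace ℝ (Fin k) := fun p => ψ p.2 - M p.1 with hD
  have hDmeas : Measurable D := (hψmeas.comp measurable_snd).sub (hMmeas.comp measurable_fst)
  set C : ℝ := max (Cψ + CM) 0 with hC
  have hDb : ∀ p, ‖D p‖ ≤ C := fun p =>
    le_max_of_le_left ((norm_sub_le _ _).trans (add_le_add (hψbdd _) (hMbdd _)))
  have hC0 : 0 ≤ C := le_max_right _ _
  set μ : Measure (𝓧 × 𝓞) := P.map (fun ω => (X i0 ω, O i0 ω)) with hμ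
  have hμprob : IsProbabilityMeasure μ := by
    rw [hμ]; exact Measure.isProbabilityMeasure_map (hmeas i0).aemeasurable
  have hμi : ∀ i, P.map (fun ω => (X i ω, O i ω)) = μ := fun i => hident i i0
  -- Ψ and its integrability
  set Ψ : Ω → EuclideanSpace ℝ (Fin k) := fun ω => ψ (O i0 ω) with hΨ
  have hΨmeas : Measurable Ψ := hψmeas.comp (hOmeas i0)
  have hΨint : Integrable Ψ P :=
    Integrable.mono' (integrable_const Cψ) hΨmeas.aestronglyMeasurable
      (ae_of_all _ fun ω => hψbdd _)
  -- Key Lemma A: the centered score integrates to zero against bounded functions of x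
  have hA : ∀ f : 𝓧 → ℝ, Measurable f → (∀ x, |f x| ≤ 1) →
      ∫ p, f p.1 • D p ∂μ = 0 := by
    intro f hf hfb
    have hgm : StronglyMeasurable[MeasurableSpace.comap (X i0) inferInstance]
        (fun ω => f (X i0 ω)) := (hf.comp hXm).stronglyMeasurable
    have hGmeas : Measurable fun p : 𝓧 × 𝓞 => f p.1 • D p :=
      (hf.comp measurable_fst).smul hDmeas
    rw [hμ, integral_map (hmeas i0).aemeasurable hGmeas.aestronglyMeasurable]
    have hint : Integrable (fun ω => f (X i0 ω) • D (X i0 ω, O i0 ω)) P := by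
      refine Integrable.mono' (integrable_const C)
        ((hGmeas.comp (hmeas i0)).aestronglyMeasurable) (ae_of_all _ fun ω => ?_)
      rw [norm_smul]
      calc ‖f (X i0 ω)‖ * ‖D (X i0 ω, O i0 ω)‖
          ≤ 1 * C := mul_le_mul (by simpa [Real.norm_eq_abs] using hfb _) (hDb _)
            (norm_nonneg _) zero_le_one
        _ = C := one_mul C
    have hcoord : ∀ j : Fin k,
        ∫ ω, f (X i0 ω) * ((Ψ ω) j - (M (X i0 ω)) j) ∂P = 0 := by
      intro j
      have hΨj : Integrable (fun ω => (Ψ ω) j) P := by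
        refine Integrable.mono' (integrable_const Cψ)
          (((EuclideanSpace.proj (𝕜 := ℝ) j).continuous.measurable.comp hΨmeas).aestronglyMeasurable)
          (ae_of_all _ fun ω => ?_)
        simpa [Real.norm_eq_abs] using (hw_abs_coord_le (Ψ ω) j).trans (hψbdd _)
      have hMj : Integrable (fun ω => (M (X i0 ω)) j) P := by
        refine Integrable.mono' (integrable_const CM)
          (((EuclideanSpace.proj (𝕜 := ℝ) j).continuous.measurable.comp (hMmeas.comp (hXmeas i0))).aestronglyMeasurable)
          (ae_of_all _ fun ω => ?_)
        simpa [Real.norm_eq_abs] using (hw_abs_coord_le (M (X i0 ω)) j).trans (hMbdd _)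
      have hMjae : (fun ω => (M (X i0 ω)) j) =ᵐ[P]
          P[(fun ω => (Ψ ω) j)|MeasurableSpace.comap (X i0) inferInstance] := by
        have h1 : (fun ω => (M (X i0 ω)) j)
            =ᵐ[P] (fun ω => (EuclideanSpace.proj (𝕜 := ℝ) j)
              ((P[Ψ|MeasurableSpace.comap (X i0) inferInstance]) ω)) := by
          filter_upwards [hM] with ω hω
          exact congrArg (fun v => v j) hω
        refine h1.trans ?_
        have h2 := hw_condexp_clm_comm hm P (EuclideanSpace.proj (𝕜 := ℝ) j) Ψ hΨint
        refine h2.trans ?_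
        apply condExp_congr_ae
        exact ae_of_all _ fun ω => rfl
      have e1 : ∫ ω, f (X i0 ω) * (Ψ ω) j ∂P
          = ∫ ω, f (X i0 ω) *
            (P[(fun ω => (Ψ ω) j)|MeasurableSpace.comap (X i0) inferInstance]) ω ∂P :=
        hw_integral_mul_condexp hm P _ _ hgm 1 (fun ω => hfb _) hΨj
      have e2 : ∫ ω, f (X i0 ω) * (M (X i0 ω)) j ∂P
          = ∫ ω, f (X i0 ω) *
            (P[(fun ω => (Ψ ω) j)|MeasurableSpace.comap (X i0) inferInstance]) ω ∂P := by
        refine integral_congr_ae ?_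
        filter_upwards [hMjae] with ω hω
        rw [hω]
      have hfΨj : Integrable (fun ω => f (X i0 ω) * (Ψ ω) j) P := by
        refine Integrable.bdd_mul hΨj ((hf.comp (hXmeas i0)).aestronglyMeasurable)
          (c := 1) (ae_of_all _ fun ω => ?_)
        simpa [Real.norm_eq_abs] using hfb _
      have hfMj : Integrable (fun ω => f (X i0 ω) * (M (X i0 ω)) j) P := by
        refine Integrable.bdd_mul hMj ((hf.comp (hXmeas i0)).aestronglyMeasurable)
          (c := 1) (ae_of_all _ fun ω => ?_)
        simpa [Real.norm_eq_abs] using hfb _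
      calc ∫ ω, f (X i0 ω) * ((Ψ ω) j - (M (X i0 ω)) j) ∂P
          = ∫ ω, (f (X i0 ω) * (Ψ ω) j - f (X i0 ω) * (M (X i0 ω)) j) ∂P := by
            congr 1; funext ω; ring
        _ = (∫ ω, f (X i0 ω) * (Ψ ω) j ∂P) - ∫ ω, f (X i0 ω) * (M (X i0 ω)) j ∂P :=
            integral_sub hfΨj hfMj
        _ = 0 := by rw [e1, e2, sub_self]
    refine PiLp.ext fun j => ?_
    rw [PiLp.zero_apply]
    calc (∫ ω, f (X i0 ω) • D (X i0 ω, O i0 ω) ∂P) j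
        = ∫ ω, (EuclideanSpace.proj (𝕜 := ℝ) j) (f (X i0 ω) • D (X i0 ω, O i0 ω)) ∂P :=
          ((EuclideanSpace.proj (𝕜 := ℝ) j).integral_comp_comm hint).symm
      _ = ∫ ω, f (X i0 ω) * ((Ψ ω) j - (M (X i0 ω)) j) ∂P := by
          refine integral_congr_ae (ae_of_all _ fun ω => ?_)
          rfl
      _ = 0 := hcoord j
  -- inner-product version of Key Lemma A
  have hA' : ∀ f : 𝓧 → ℝ, Measurable f → (∀ x, |f x| ≤ 1) →
      ∀ w : EuclideanSpace ℝ (Fin k),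
      ∫ p, f p.1 * (inner ℝ (D p) w : ℝ) ∂μ = 0 := by
    intro f hf hfb w
    have hint : Integrable (fun p => f p.1 • D p) μ := by
      refine Integrable.mono' (integrable_const C)
        (((hf.comp measurable_fst).smul hDmeas).aestronglyMeasurable)
        (ae_of_all _ fun p => ?_)
      rw [norm_smul]
      calc ‖f p.1‖ * ‖D p‖ ≤ 1 * C := mul_le_mul (by simpa [Real.norm_eq_abs] using hfb _)
            (hDb _) (norm_nonneg _) zero_le_one
        _ = C := one_mul C
    calc ∫ p, f p.1 * (inner ℝ (D p) w : ℝ) ∂μ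
        = ∫ p, (inner ℝ w (f p.1 • D p) : ℝ) ∂μ := by
          refine integral_congr_ae (ae_of_all _ fun p => ?_)
          show f p.1 * (inner ℝ (D p) w : ℝ) = (inner ℝ w (f p.1 • D p) : ℝ)
          rw [real_inner_smul_right, real_inner_comm]
      _ = (inner ℝ w (∫ p, f p.1 • D p ∂μ) : ℝ) := integral_inner hint w
      _ = 0 := by rw [hA f hf hfb, inner_zero_right]
  -- Key Lemma B
  have hB : ∀ V : ℝ,
      (∀ᵐ ω ∂P, (P[(fun ω' => ‖ψ (O i0 ω') - M (X i0 ω')‖ ^ 2) |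
          MeasurableSpace.comap (X i0) inferInstance]) ω ≤ V) →
      ∀ f : 𝓧 → ℝ, Measurable f → (∀ x, 0 ≤ f x) → (∀ x, f x ≤ 1) →
      ∫ p, f p.1 * ‖D p‖ ^ 2 ∂μ ≤ V * ∫ p, f p.1 ∂μ := by
    intro V hVb f hf hf0 hf1
    have hfb : ∀ x, |f x| ≤ 1 := fun x => abs_le.mpr ⟨by linarith [hf0 x], hf1 x⟩
    have h2meas : Measurable (fun ω => ‖ψ (O i0 ω) - M (X i0 ω)‖ ^ 2) :=
      (((hψmeas.comp (hOmeas i0)).sub (hMmeas.comp (hXmeas i0))).norm).pow_const 2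
    have h2int : Integrable (fun ω => ‖ψ (O i0 ω) - M (X i0 ω)‖ ^ 2) P := by
      refine Integrable.mono' (integrable_const (C ^ 2)) h2meas.aestronglyMeasurable
        (ae_of_all _ fun ω => ?_)
      rw [Real.norm_eq_abs, abs_of_nonneg (by positivity)]
      exact pow_le_pow_left₀ (norm_nonneg _) (hDb (X i0 ω, O i0 ω)) 2
    have hgm : StronglyMeasurable[MeasurableSpace.comap (X i0) inferInstance]
        (fun ω => f (X i0 ω)) := (hf.comp hXm).stronglyMeasurable
    have hfaesm : AEStronglyMeasurable (fun ω => f (X i0 ω)) P :=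
      (hf.comp (hXmeas i0)).aestronglyMeasurable
    have hG1 : Measurable (fun p : 𝓧 × 𝓞 => f p.1 * ‖D p‖ ^ 2) :=
      (hf.comp measurable_fst).mul (hDmeas.norm.pow_const 2)
    have hG2 : Measurable (fun p : 𝓧 × 𝓞 => f p.1) := hf.comp measurable_fst
    have e1 : ∫ p, f p.1 * ‖D p‖ ^ 2 ∂μ
        = ∫ ω, f (X i0 ω) * ‖ψ (O i0 ω) - M (X i0 ω)‖ ^ 2 ∂P := by
      rw [hμ, integral_map (hmeas i0).aemeasurable hG1.aestronglyMeasurable]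
    have e2 : ∫ p, (f p.1 : ℝ) ∂μ = ∫ ω, f (X i0 ω) ∂P := by
      rw [hμ, integral_map (hmeas i0).aemeasurable hG2.aestronglyMeasurable]
    have e3 : ∫ ω, f (X i0 ω) * ‖ψ (O i0 ω) - M (X i0 ω)‖ ^ 2 ∂P
        = ∫ ω, f (X i0 ω) *
          (P[(fun ω' => ‖ψ (O i0 ω') - M (X i0 ω')‖ ^ 2) |
            MeasurableSpace.comap (X i0) inferInstance]) ω ∂P :=
      hw_integral_mul_condexp hm P _ _ hgm 1 (fun ω => hfb _) h2int
    have e4 : ∫ ω, f (X i0 ω) *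
          (P[(fun ω' => ‖ψ (O i0 ω') - M (X i0 ω')‖ ^ 2) |
            MeasurableSpace.comap (X i0) inferInstance]) ω ∂P
        ≤ ∫ ω, f (X i0 ω) * V ∂P := by
      refine integral_mono_ae ?_ ?_ ?_
      · exact Integrable.bdd_mul integrable_condExp hfaesm
          (c := 1) (ae_of_all _ fun ω => by simpa [Real.norm_eq_abs] using hfb _)
      · exact Integrable.bdd_mul (integrable_const V) hfaesm
          (c := 1) (ae_of_all _ fun ω => by simpa [Real.norm_eq_abs] using hfb _)
      · filter_upwards [hVb] with ω hω
        exact mul_le_mul_of_nonneg_left hω (hf0 _)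
    have e5 : ∫ ω, f (X i0 ω) * V ∂P = V * ∫ ω, f (X i0 ω) ∂P := by
      rw [integral_mul_const]; ring
    rw [e1, e2]
    calc ∫ ω, f (X i0 ω) * ‖ψ (O i0 ω) - M (X i0 ω)‖ ^ 2 ∂P
        ≤ ∫ ω, f (X i0 ω) * V ∂P := by rw [e3]; exact e4
      _ = V * ∫ ω, f (X i0 ω) ∂P := e5
  -- α bounds
  have hα1 : ∀ i v, α i v ≤ 1 := fun i v =>
    (Finset.single_le_sum (f := fun j => α j v) (fun j _ => hαnn j v)
      (Finset.mem_univ i)).trans (le_of_eq (hαsum v))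
  have hαabs : ∀ i v, |α i v| ≤ 1 := fun i v => abs_le.mpr ⟨by linarith [hαnn i v], hα1 i v⟩
  -- independence of coordinate i from the rest
  have hZmeas : ∀ i : Fin n,
      Measurable (fun ω (l : {l : Fin n // l ≠ i}) => (X l.1 ω, O l.1 ω)) :=
    fun i => measurable_pi_lambda _ fun l => hmeas l.1
  have hZYindep : ∀ i : Fin n,
      IndepFun (fun ω (l : {l : Fin n // l ≠ i}) => (X l.1 ω, O l.1 ω))
        (fun ω => (X i ω, O i ω)) P := by
    intro i
    have h := hindep.indepFun_finset ({i}ᶜ) {i} (by simp) (fun j => hmeas j)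
    have hφ : Measurable (fun (v : ∀ _ : ({i}ᶜ : Finset (Fin n)), 𝓧 × 𝓞)
        (l : {l : Fin n // l ≠ i}) =>
          v ⟨l.1, Finset.mem_compl.mpr (fun hmem => l.2 (Finset.mem_singleton.mp hmem))⟩) :=
      measurable_pi_lambda _ fun l => measurable_pi_apply _
    have hψ' : Measurable (fun (v : ∀ _ : ({i} : Finset (Fin n)), 𝓧 × 𝓞) =>
        v ⟨i, Finset.mem_singleton_self i⟩) := measurable_pi_apply _
    exact h.comp hφ hψ'
  -- identification of the reconstructed covariate vector
  have hrec : ∀ (i : Fin n) (ω : Ω),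
      hwReco i ((fun l : {l : Fin n // l ≠ i} => (X l.1 ω, O l.1 ω)), (X i ω, O i ω))
        = fun j => X j ω :=
    fun i ω => hwReco_eq i (fun j => X j ω) (fun j => O j ω)
  -- integrability of the individual terms
  have hαX : ∀ i, Measurable (fun ω => α i (fun j => X j ω)) :=
    fun i => (hαmeas i).comp (measurable_pi_lambda _ fun j => hXmeas j)
  have hDiMeas : ∀ i, Measurable (fun ω => ψ (O i ω) - M (X i ω)) :=
    fun i => (hψmeas.comp (hOmeas i)).sub (hMmeas.comp (hXmeas i))
  have hterm_int : ∀ i : Fin n,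
      Integrable (fun ω => α i (fun j => X j ω) • (ψ (O i ω) - M (X i ω))) P := by
    intro i
    refine Integrable.mono' (integrable_const C)
      (((hαX i).smul (hDiMeas i)).aestronglyMeasurable) (ae_of_all _ fun ω => ?_)
    rw [norm_smul]
    calc ‖α i (fun j => X j ω)‖ * ‖ψ (O i ω) - M (X i ω)‖
        ≤ 1 * C := mul_le_mul (by simpa [Real.norm_eq_abs] using hαabs i _)
          (hDb (X i ω, O i ω)) (norm_nonneg _) zero_le_one
      _ = C := one_mul C
  -- the per-term mean-zero property
  have hzero : ∀ i : Fin n,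
      ∫ ω, α i (fun j => X j ω) • (ψ (O i ω) - M (X i ω)) ∂P = 0 := by
    intro i
    set H : ({l : Fin n // l ≠ i} → 𝓧 × 𝓞) × (𝓧 × 𝓞) → EuclideanSpace ℝ (Fin k) :=
      fun p => α i (hwReco i p) • D p.2 with hHdef
    have hHmeas : Measurable H :=
      ((hαmeas i).comp (hwReco_meas i)).smul (hDmeas.comp measurable_snd)
    have hHb : ∀ p, ‖H p‖ ≤ C := by
      intro p
      rw [hHdef]
      simp only
      rw [norm_smul]
      calc ‖α i (hwReco i p)‖ * ‖D p.2‖ ≤ 1 * C :=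
            mul_le_mul (by simpa [Real.norm_eq_abs] using hαabs i _) (hDb _)
              (norm_nonneg _) zero_le_one
        _ = C := one_mul C
    have hfub := hw_indep_fubini P _ _ (hZmeas i) (hmeas i) (hZYindep i) H hHmeas C hHb
    have hLHS : ∀ ω : Ω,
        H ((fun l : {l : Fin n // l ≠ i} => (X l.1 ω, O l.1 ω)), (X i ω, O i ω))
          = α i (fun j => X j ω) • (ψ (O i ω) - M (X i ω)) := by
      intro ω
      show α i (hwReco i ((fun l : {l : Fin n // l ≠ i} => (X l.1 ω, O l.1 ω)),
        (X i ω, O i ω))) • D (X i ω, O i ω) = _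
      rw [hrec i ω]
    calc ∫ ω, α i (fun j => X j ω) • (ψ (O i ω) - M (X i ω)) ∂P
        = ∫ ω, H ((fun l : {l : Fin n // l ≠ i} => (X l.1 ω, O l.1 ω)),
            (X i ω, O i ω)) ∂P := integral_congr_ae (ae_of_all _ fun ω => (hLHS ω).symm)
      _ = ∫ z, ∫ y, H (z, y) ∂(P.map (fun ω => (X i ω, O i ω)))
            ∂(P.map (fun ω (l : {l : Fin n // l ≠ i}) => (X l.1 ω, O l.1 ω))) := hfub
      _ = ∫ z, (0 : EuclideanSpace ℝ (Fin k))
            ∂(P.map (fun ω (l : {l : Fin n // l ≠ i}) => (X l.1 ω, O l.1 ω))) := by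
          refine integral_congr_ae (ae_of_all _ fun z => ?_)
          rw [hμi i]
          have hfmeas : Measurable (fun x : 𝓧 =>
              α i (fun l => if h : l = i then x else (z ⟨l, h⟩).1)) := by
            apply (hαmeas i).comp
            apply measurable_pi_lambda
            intro l
            by_cases h : l = i
            · simp only [dif_pos h]; exact measurable_id
            · simp only [dif_neg h]; exact measurable_const
          have hfb : ∀ x : 𝓧,
              |α i (fun l => if h : l = i then x else (z ⟨l, h⟩).1)| ≤ 1 :=
            fun x => hαabs i _
          have hHf : ∀ y : 𝓧 × 𝓞, H (z, y)
              = (fun x : 𝓧 => α i (fun l => if h : l = i then x else (z ⟨l, h⟩).1)) y.1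
                • D y := fun y => rfl
          calc ∫ y, H (z, y) ∂μ
              = ∫ y, (fun x : 𝓧 =>
                  α i (fun l => if h : l = i then x else (z ⟨l, h⟩).1)) y.1 • D y ∂μ :=
                integral_congr_ae (ae_of_all _ hHf)
            _ = 0 := hA _ hfmeas hfb
      _ = 0 := integral_zero _ _
  constructor
  · rw [integral_finset_sum _ (fun i _ => hterm_int i)]
    exact Finset.sum_eq_zero fun i _ => hzero i
  · intro V hV hVb
    -- expansion of the squared norm
    have hexp : ∀ ω : Ω, ‖∑ i, α i (fun j => X j ω) • (ψ (O i ω) - M (X i ω))‖ ^ 2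
        = ∑ i, ∑ j, α i (fun l => X l ω) * (α j (fun l => X l ω) *
            (inner ℝ (ψ (O i ω) - M (X i ω)) (ψ (O j ω) - M (X j ω)) : ℝ)) := by
      intro ω
      rw [← real_inner_self_eq_norm_sq, sum_inner]
      refine Finset.sum_congr rfl fun i _ => ?_
      rw [inner_sum]
      refine Finset.sum_congr rfl fun j _ => ?_
      rw [real_inner_smul_left, real_inner_smul_right]
    have htij_meas : ∀ i j : Fin n,
        Measurable (fun ω => α i (fun l => X l ω) * (α j (fun l => X l ω) *
          (inner ℝ (ψ (O i ω) - M (X i ω)) (ψ (O j ω) - M (X j ω)) : ℝ))) :=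
      fun i j => (hαX i).mul ((hαX j).mul ((hDiMeas i).inner (hDiMeas j)))
    have htij_bdd : ∀ (i j : Fin n) (ω : Ω),
        ‖α i (fun l => X l ω) * (α j (fun l => X l ω) *
          (inner ℝ (ψ (O i ω) - M (X i ω)) (ψ (O j ω) - M (X j ω)) : ℝ))‖ ≤ C * C := by
      intro i j ω
      rw [Real.norm_eq_abs, abs_mul, abs_mul]
      have h1 : |(inner ℝ (ψ (O i ω) - M (X i ω)) (ψ (O j ω) - M (X j ω)) : ℝ)| ≤ C * C :=
        (abs_real_inner_le_norm _ _).trans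
          (mul_le_mul (hDb (X i ω, O i ω)) (hDb (X j ω, O j ω)) (norm_nonneg _) hC0)
      calc |α i (fun l => X l ω)| * (|α j (fun l => X l ω)| *
            |(inner ℝ (ψ (O i ω) - M (X i ω)) (ψ (O j ω) - M (X j ω)) : ℝ)|)
          ≤ 1 * (1 * (C * C)) := by
            refine mul_le_mul (hαabs i _) ?_ (by positivity) zero_le_one
            exact mul_le_mul (hαabs j _) h1 (abs_nonneg _) zero_le_one
        _ = C * C := by ring
    have htij_int : ∀ i j : Fin n,
        Integrable (fun ω => α i (fun l => X l ω) * (α j (fun l => X l ω) *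
          (inner ℝ (ψ (O i ω) - M (X i ω)) (ψ (O j ω) - M (X j ω)) : ℝ))) P :=
      fun i j => Integrable.mono' (integrable_const (C * C))
        ((htij_meas i j).aestronglyMeasurable) (ae_of_all _ fun ω => htij_bdd i j ω)
    -- cross terms vanish
    have hcross : ∀ i j : Fin n, j ≠ i →
        ∫ ω, α i (fun l => X l ω) * (α j (fun l => X l ω) *
          (inner ℝ (ψ (O i ω) - M (X i ω)) (ψ (O j ω) - M (X j ω)) : ℝ)) ∂P = 0 := by
      intro i j hji
      set H : ({l : Fin n // l ≠ i} → 𝓧 × 𝓞) × (𝓧 × 𝓞) → ℝ :=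
        fun p => (α i (hwReco i p) * α j (hwReco i p)) *
          (inner ℝ (D p.2) (D (p.1 ⟨j, hji⟩)) : ℝ) with hHdef
      have hHmeas : Measurable H := by
        refine Measurable.mul ?_ ?_
        · exact ((hαmeas i).comp (hwReco_meas i)).mul ((hαmeas j).comp (hwReco_meas i))
        · exact (hDmeas.comp measurable_snd).inner
            (hDmeas.comp ((measurable_pi_apply _).comp measurable_fst))
      have hHb : ∀ p, ‖H p‖ ≤ C * C := by
        intro p
        rw [hHdef]
        simp only
        rw [Real.norm_eq_abs, abs_mul, abs_mul]
        have h1 : |(inner ℝ (D p.2) (D (p.1 ⟨j, hji⟩)) : ℝ)| ≤ C * C :=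
          (abs_real_inner_le_norm _ _).trans
            (mul_le_mul (hDb _) (hDb _) (norm_nonneg _) hC0)
        calc |α i (hwReco i p)| * |α j (hwReco i p)| * |(inner ℝ (D p.2) (D (p.1 ⟨j, hji⟩)) : ℝ)|
            ≤ 1 * 1 * (C * C) := by
              refine mul_le_mul (mul_le_mul (hαabs i _) (hαabs j _) (abs_nonneg _) zero_le_one)
                h1 (abs_nonneg _) (by norm_num)
          _ = C * C := by ring
      have hfub := hw_indep_fubini P _ _ (hZmeas i) (hmeas i) (hZYindep i) H hHmeas (C * C) hHb
      have hLHS : ∀ ω : Ω,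
          H ((fun l : {l : Fin n // l ≠ i} => (X l.1 ω, O l.1 ω)), (X i ω, O i ω))
            = α i (fun l => X l ω) * (α j (fun l => X l ω) *
              (inner ℝ (ψ (O i ω) - M (X i ω)) (ψ (O j ω) - M (X j ω)) : ℝ)) := by
        intro ω
        show (α i (hwReco i ((fun l : {l : Fin n // l ≠ i} => (X l.1 ω, O l.1 ω)),
            (X i ω, O i ω))) * α j (hwReco i ((fun l : {l : Fin n // l ≠ i} =>
              (X l.1 ω, O l.1 ω)), (X i ω, O i ω)))) *
            (inner ℝ (D (X i ω, O i ω)) (D (X j ω, O j ω)) : ℝ) = _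
        rw [hrec i ω]
        show (α i (fun l => X l ω) * α j (fun l => X l ω)) *
            (inner ℝ (ψ (O i ω) - M (X i ω)) (ψ (O j ω) - M (X j ω)) : ℝ) = _
        ring
      calc ∫ ω, α i (fun l => X l ω) * (α j (fun l => X l ω) *
            (inner ℝ (ψ (O i ω) - M (X i ω)) (ψ (O j ω) - M (X j ω)) : ℝ)) ∂P
          = ∫ ω, H ((fun l : {l : Fin n // l ≠ i} => (X l.1 ω, O l.1 ω)),
              (X i ω, O i ω)) ∂P := integral_congr_ae (ae_of_all _ fun ω => (hLHS ω).symm)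
        _ = ∫ z, ∫ y, H (z, y) ∂(P.map (fun ω => (X i ω, O i ω)))
              ∂(P.map (fun ω (l : {l : Fin n // l ≠ i}) => (X l.1 ω, O l.1 ω))) := hfub
        _ = ∫ z, (0 : ℝ)
              ∂(P.map (fun ω (l : {l : Fin n // l ≠ i}) => (X l.1 ω, O l.1 ω))) := by
            refine integral_congr_ae (ae_of_all _ fun z => ?_)
            rw [hμi i]
            have hfmeas : Measurable (fun x : 𝓧 =>
                α i (fun l => if h : l = i then x else (z ⟨l, h⟩).1) *
                α j (fun l => if h : l = i then x else (z ⟨l, h⟩).1)) := by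
              have hbase : Measurable (fun x : 𝓧 =>
                  (fun l => if h : l = i then x else (z ⟨l, h⟩).1 : Fin n → 𝓧)) := by
                apply measurable_pi_lambda
                intro l
                by_cases h : l = i
                · simp only [dif_pos h]; exact measurable_id
                · simp only [dif_neg h]; exact measurable_const
              exact ((hαmeas i).comp hbase).mul ((hαmeas j).comp hbase)
            have hfb : ∀ x : 𝓧,
                |α i (fun l => if h : l = i then x else (z ⟨l, h⟩).1) *
                  α j (fun l => if h : l = i then x else (z ⟨l, h⟩).1)| ≤ 1 := by
              intro x
              rw [abs_mul]
              calc |α i _| * |α j _| ≤ 1 * 1 :=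
                    mul_le_mul (hαabs i _) (hαabs j _) (abs_nonneg _) zero_le_one
                _ = 1 := one_mul 1
            have hHf : ∀ y : 𝓧 × 𝓞, H (z, y)
                = (fun x : 𝓧 =>
                    α i (fun l => if h : l = i then x else (z ⟨l, h⟩).1) *
                    α j (fun l => if h : l = i then x else (z ⟨l, h⟩).1)) y.1 *
                  (inner ℝ (D y) (D (z ⟨j, hji⟩)) : ℝ) := fun y => rfl
            calc ∫ y, H (z, y) ∂μ
                = ∫ y, (fun x : 𝓧 =>
                    α i (fun l => if h : l = i then x else (z ⟨l, h⟩).1) *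
                    α j (fun l => if h : l = i then x else (z ⟨l, h⟩).1)) y.1 *
                  (inner ℝ (D y) (D (z ⟨j, hji⟩)) : ℝ) ∂μ :=
                  integral_congr_ae (ae_of_all _ hHf)
              _ = 0 := hA' _ hfmeas hfb (D (z ⟨j, hji⟩))
        _ = 0 := integral_zero _ _
    -- diagonal terms
    have hαsq_meas : ∀ i, Measurable (fun ω => α i (fun l => X l ω) ^ 2) :=
      fun i => (hαX i).pow_const 2
    have hαsq_int : ∀ i, Integrable (fun ω => α i (fun l => X l ω) ^ 2) P := by
      intro i
      refine Integrable.mono' (integrable_const 1) ((hαsq_meas i).aestronglyMeasurable)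
        (ae_of_all _ fun ω => ?_)
      rw [Real.norm_eq_abs, abs_of_nonneg (by positivity)]
      exact pow_le_one₀ (hαnn i _) (hα1 i _)
    have hdiag : ∀ i : Fin n,
        ∫ ω, α i (fun l => X l ω) * (α i (fun l => X l ω) *
          (inner ℝ (ψ (O i ω) - M (X i ω)) (ψ (O i ω) - M (X i ω)) : ℝ)) ∂P
        ≤ V * ∫ ω, α i (fun l => X l ω) ^ 2 ∂P := by
      intro i
      set H3 : ({l : Fin n // l ≠ i} → 𝓧 × 𝓞) × (𝓧 × 𝓞) → ℝ :=
        fun p => α i (hwReco i p) ^ 2 * ‖D p.2‖ ^ 2 with hH3def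
      set H4 : ({l : Fin n // l ≠ i} → 𝓧 × 𝓞) × (𝓧 × 𝓞) → ℝ :=
        fun p => α i (hwReco i p) ^ 2 with hH4def
      have hH3meas : Measurable H3 :=
        (((hαmeas i).comp (hwReco_meas i)).pow_const 2).mul
          (((hDmeas.comp measurable_snd).norm).pow_const 2)
      have hH4meas : Measurable H4 := ((hαmeas i).comp (hwReco_meas i)).pow_const 2
      have hα01 : ∀ p : ({l : Fin n // l ≠ i} → 𝓧 × 𝓞) × (𝓧 × 𝓞),
          0 ≤ α i (hwReco i p) ^ 2 ∧ α i (hwReco i p) ^ 2 ≤ 1 :=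
        fun p => ⟨by positivity, pow_le_one₀ (hαnn i _) (hα1 i _)⟩
      have hH3b : ∀ p, ‖H3 p‖ ≤ C * C := by
        intro p
        rw [hH3def]
        simp only
        rw [Real.norm_eq_abs, abs_of_nonneg (by positivity)]
        calc α i (hwReco i p) ^ 2 * ‖D p.2‖ ^ 2 ≤ 1 * (C * C) := by
              refine mul_le_mul ((hα01 p).2) ?_ (by positivity) zero_le_one
              rw [sq]
              exact mul_le_mul (hDb _) (hDb _) (norm_nonneg _) hC0
          _ = C * C := one_mul _
      have hH4b : ∀ p, ‖H4 p‖ ≤ 1 := by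
        intro p
        rw [hH4def]
        simp only
        rw [Real.norm_eq_abs, abs_of_nonneg (hα01 p).1]
        exact (hα01 p).2
      have hfub3 := hw_indep_fubini P _ _ (hZmeas i) (hmeas i) (hZYindep i) H3 hH3meas
        (C * C) hH3b
      have hfub4 := hw_indep_fubini P _ _ (hZmeas i) (hmeas i) (hZYindep i) H4 hH4meas 1 hH4b
      have hint3 := hw_indep_fubini_integrable P _ _ (hZmeas i) (hmeas i) H3 hH3meas
        (C * C) hH3b
      have hint4 := hw_indep_fubini_integrable P _ _ (hZmeas i) (hmeas i) H4 hH4meas 1 hH4b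
      have hL3 : ∀ ω : Ω,
          H3 ((fun l : {l : Fin n // l ≠ i} => (X l.1 ω, O l.1 ω)), (X i ω, O i ω))
            = α i (fun l => X l ω) * (α i (fun l => X l ω) *
              (inner ℝ (ψ (O i ω) - M (X i ω)) (ψ (O i ω) - M (X i ω)) : ℝ)) := by
        intro ω
        show α i (hwReco i ((fun l : {l : Fin n // l ≠ i} => (X l.1 ω, O l.1 ω)),
            (X i ω, O i ω))) ^ 2 * ‖D (X i ω, O i ω)‖ ^ 2 = _
        rw [hrec i ω]
        show α i (fun l => X l ω) ^ 2 * ‖ψ (O i ω) - M (X i ω)‖ ^ 2 = _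
        rw [real_inner_self_eq_norm_sq]
        ring
      have hL4 : ∀ ω : Ω,
          H4 ((fun l : {l : Fin n // l ≠ i} => (X l.1 ω, O l.1 ω)), (X i ω, O i ω))
            = α i (fun l => X l ω) ^ 2 := by
        intro ω
        show α i (hwReco i ((fun l : {l : Fin n // l ≠ i} => (X l.1 ω, O l.1 ω)),
            (X i ω, O i ω))) ^ 2 = _
        rw [hrec i ω]
      have hinner : ∀ z, ∫ y, H3 (z, y) ∂μ ≤ V * ∫ y, H4 (z, y) ∂μ := by
        intro z
        have hfmeas : Measurable (fun x : 𝓧 =>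
            α i (fun l => if h : l = i then x else (z ⟨l, h⟩).1) ^ 2) := by
          have hbase : Measurable (fun x : 𝓧 =>
              (fun l => if h : l = i then x else (z ⟨l, h⟩).1 : Fin n → 𝓧)) := by
            apply measurable_pi_lambda
            intro l
            by_cases h : l = i
            · simp only [dif_pos h]; exact measurable_id
            · simp only [dif_neg h]; exact measurable_const
          exact ((hαmeas i).comp hbase).pow_const 2
        have hf0 : ∀ x : 𝓧,
            0 ≤ α i (fun l => if h : l = i then x else (z ⟨l, h⟩).1) ^ 2 :=
          fun x => by positivity
        have hf1 : ∀ x : 𝓧,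
            α i (fun l => if h : l = i then x else (z ⟨l, h⟩).1) ^ 2 ≤ 1 :=
          fun x => pow_le_one₀ (hαnn i _) (hα1 i _)
        have hHf3 : ∀ y : 𝓧 × 𝓞, H3 (z, y)
            = (fun x : 𝓧 =>
                α i (fun l => if h : l = i then x else (z ⟨l, h⟩).1) ^ 2) y.1 *
              ‖D y‖ ^ 2 := fun y => rfl
        have hHf4 : ∀ y : 𝓧 × 𝓞, H4 (z, y)
            = (fun x : 𝓧 =>
                α i (fun l => if h : l = i then x else (z ⟨l, h⟩).1) ^ 2) y.1 :=
          fun y => rfl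
        calc ∫ y, H3 (z, y) ∂μ
            = ∫ y, (fun x : 𝓧 =>
                α i (fun l => if h : l = i then x else (z ⟨l, h⟩).1) ^ 2) y.1 *
                ‖D y‖ ^ 2 ∂μ := integral_congr_ae (ae_of_all _ hHf3)
          _ ≤ V * ∫ y, (fun x : 𝓧 =>
                α i (fun l => if h : l = i then x else (z ⟨l, h⟩).1) ^ 2) y.1 ∂μ :=
              hB V hVb _ hfmeas hf0 hf1
          _ = V * ∫ y, H4 (z, y) ∂μ := by
              rw [integral_congr_ae (ae_of_all _ hHf4)]
      calc ∫ ω, α i (fun l => X l ω) * (α i (fun l => X l ω) *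
            (inner ℝ (ψ (O i ω) - M (X i ω)) (ψ (O i ω) - M (X i ω)) : ℝ)) ∂P
          = ∫ ω, H3 ((fun l : {l : Fin n // l ≠ i} => (X l.1 ω, O l.1 ω)),
              (X i ω, O i ω)) ∂P := integral_congr_ae (ae_of_all _ fun ω => (hL3 ω).symm)
        _ = ∫ z, ∫ y, H3 (z, y) ∂(P.map (fun ω => (X i ω, O i ω)))
              ∂(P.map (fun ω (l : {l : Fin n // l ≠ i}) => (X l.1 ω, O l.1 ω))) := hfub3
        _ ≤ ∫ z, V * ∫ y, H4 (z, y) ∂(P.map (fun ω => (X i ω, O i ω)))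
              ∂(P.map (fun ω (l : {l : Fin n // l ≠ i}) => (X l.1 ω, O l.1 ω))) := by
            refine integral_mono_ae hint3 (hint4.const_mul V) ?_
            refine ae_of_all _ fun z => ?_
            rw [hμi i] at *
            exact hinner z
        _ = V * ∫ z, ∫ y, H4 (z, y) ∂(P.map (fun ω => (X i ω, O i ω)))
              ∂(P.map (fun ω (l : {l : Fin n // l ≠ i}) => (X l.1 ω, O l.1 ω))) :=
            integral_const_mul V _
        _ = V * ∫ ω, H4 ((fun l : {l : Fin n // l ≠ i} => (X l.1 ω, O l.1 ω)),
              (X i ω, O i ω)) ∂P := by rw [hfub4]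
        _ = V * ∫ ω, α i (fun l => X l ω) ^ 2 ∂P := by
            rw [integral_congr_ae (ae_of_all _ fun ω => hL4 ω)]
    -- put everything together
    have hsum_sq_le : ∫ ω, (∑ i, α i (fun l => X l ω) ^ 2) ∂P ≤ 1 := by
      have h1 : ∀ ω : Ω, (∑ i, α i (fun l => X l ω) ^ 2) ≤ 1 := by
        intro ω
        calc (∑ i, α i (fun l => X l ω) ^ 2) ≤ ∑ i, α i (fun l => X l ω) := by
              refine Finset.sum_le_sum fun i _ => ?_
              nlinarith [hαnn i (fun l => X l ω), hα1 i (fun l => X l ω)]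
          _ = 1 := hαsum _
      calc ∫ ω, (∑ i, α i (fun l => X l ω) ^ 2) ∂P
          ≤ ∫ _, (1 : ℝ) ∂P := by
            refine integral_mono (integrable_finset_sum _ fun i _ => hαsq_int i)
              (integrable_const 1) h1
        _ = 1 := by simp
    calc ∫ ω, ‖∑ i, α i (fun j => X j ω) • (ψ (O i ω) - M (X i ω))‖ ^ 2 ∂P
        = ∫ ω, ∑ i, ∑ j, α i (fun l => X l ω) * (α j (fun l => X l ω) *
            (inner ℝ (ψ (O i ω) - M (X i ω)) (ψ (O j ω) - M (X j ω)) : ℝ)) ∂P :=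
          integral_congr_ae (ae_of_all _ hexp)
      _ = ∑ i, ∑ j, ∫ ω, α i (fun l => X l ω) * (α j (fun l => X l ω) *
            (inner ℝ (ψ (O i ω) - M (X i ω)) (ψ (O j ω) - M (X j ω)) : ℝ)) ∂P := by
          rw [integral_finset_sum _ (fun i _ =>
            integrable_finset_sum _ fun j _ => htij_int i j)]
          exact Finset.sum_congr rfl fun i _ =>
            integral_finset_sum _ fun j _ => htij_int i j
      _ = ∑ i, ∫ ω, α i (fun l => X l ω) * (α i (fun l => X l ω) *
            (inner ℝ (ψ (O i ω) - M (X i ω)) (ψ (O i ω) - M (X i ω)) : ℝ)) ∂P := by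
          refine Finset.sum_congr rfl fun i _ => ?_
          exact Finset.sum_eq_single_of_mem i (Finset.mem_univ i)
            (fun j _ hj => hcross i j hj)
      _ ≤ ∑ i, V * ∫ ω, α i (fun l => X l ω) ^ 2 ∂P :=
          Finset.sum_le_sum fun i _ => hdiag i
      _ = V * ∫ ω, (∑ i, α i (fun l => X l ω) ^ 2) ∂P := by
          rw [← Finset.mul_sum, integral_finset_sum _ (fun i _ => hαsq_int i)]
      _ ≤ V * 1 := mul_le_mul_of_nonneg_left hsum_sq_le hV
      _ = V := mul_one V
end

section
/- Let n ≥ s ≥ 1, set k := ⌊n/s⌋, let E be a set, let x₁, …, xₙ ∈ E, and let h : Eˢ → ℝ be any function. Then (n!/(n−s)!)⁻¹ Σ_{ι} h(x_{ι(1)}, …, x_{ι(s)}) = (n!)⁻¹ Σ_{σ} k⁻¹ Σ_{j=1}^{k} h(x_{σ((j−1)s+1)}, …, x_{σ(js)}), where the first sum ranges over all injections ι : {1, …, s} → {1, …, n} and the second sum ranges over all permutations σ of {1, …, n}. -/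
open Finset

lemma exists_perm_comp_eq {n s : ℕ} (e ι : Fin s ↪ Fin n) :
    ∃ σ : Equiv.Perm (Fin n), ∀ i, σ (e i) = ι i := by
  classical
  let e₀ : (Set.range e) ≃ (Set.range ι) :=
    (Equiv.ofInjective e e.injective).symm.trans (Equiv.ofInjective ι ι.injective)
  have hcard : Fintype.card ((Set.range ⇑e)ᶜ : Set (Fin n)) =
      Fintype.card ((Set.range ⇑ι)ᶜ : Set (Fin n)) := by
    rw [Fintype.card_compl_set, Fintype.card_compl_set,
      Fintype.card_range, Fintype.card_range]
  obtain ⟨σ, hσ⟩ := (Equiv.Set.compl e₀).symm (Fintype.equivOfCardEq hcard)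
  refine ⟨σ, fun i => ?_⟩
  have := hσ ⟨e i, Set.mem_range_self i⟩
  simpa [e₀, Equiv.ofInjective_symm_apply] using this

lemma perm_sum_comp {n s : ℕ} (hsn : s ≤ n) (e : Fin s ↪ Fin n)
    (f : (Fin s ↪ Fin n) → ℝ) :
    ∑ σ : Equiv.Perm (Fin n), f (e.trans σ.toEmbedding)
      = ((n - s).factorial : ℝ) * ∑ ι : Fin s ↪ Fin n, f ι := by
  classical
  set g : Equiv.Perm (Fin n) → (Fin s ↪ Fin n) := fun σ => e.trans σ.toEmbedding with hg
  -- all fibers have the same cardinality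
  have fib_eq : ∀ ι ι' : Fin s ↪ Fin n,
      (univ.filter fun σ => g σ = ι).card = (univ.filter fun σ => g σ = ι').card := by
    intro ι ι'
    obtain ⟨τ, hτ⟩ := exists_perm_comp_eq e ι
    obtain ⟨τ', hτ'⟩ := exists_perm_comp_eq e ι'
    refine Finset.card_bij' (fun σ _ => τ' * τ⁻¹ * σ) (fun σ _ => τ * τ'⁻¹ * σ) ?_ ?_ ?_ ?_
    · intro σ hσ
      simp only [mem_filter, mem_univ, true_and, hg] at hσ ⊢
      ext i
      have h1 : σ (e i) = ι i := by rw [← hσ]; rfl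
      simp [Equiv.Perm.mul_apply, h1, ← hτ i, hτ' i]
    · intro σ hσ
      simp only [mem_filter, mem_univ, true_and, hg] at hσ ⊢
      ext i
      have h1 : σ (e i) = ι' i := by rw [← hσ]; rfl
      simp [Equiv.Perm.mul_apply, h1, ← hτ' i, hτ i]
    · intro σ _; group
    · intro σ _; group
  have total : ∑ ι : Fin s ↪ Fin n, (univ.filter fun σ => g σ = ι).card
      = n.factorial := by
    rw [← Finset.card_eq_sum_card_fiberwise (fun σ _ => mem_univ (g σ))]
    simp [Fintype.card_perm]
  have key : ∀ ι : Fin s ↪ Fin n,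
      (univ.filter fun σ => g σ = ι).card = (n - s).factorial := by
    intro ι
    have hconst : ∑ ι' : Fin s ↪ Fin n, (univ.filter fun σ => g σ = ι').card
        = Fintype.card (Fin s ↪ Fin n) * (univ.filter fun σ => g σ = ι).card := by
      rw [Finset.sum_congr rfl (fun ι' _ => fib_eq ι' ι), Finset.sum_const,
        Finset.card_univ, smul_eq_mul]
    have hcardemb : Fintype.card (Fin s ↪ Fin n) = n.descFactorial s := by
      simp [Fintype.card_embedding_eq, Fintype.card_fin]
    have hfin : n.descFactorial s * (univ.filter fun σ => g σ = ι).card = n.factorial := by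
      rw [← hcardemb, ← hconst, total]
    have hfact : n.descFactorial s * (n - s).factorial = n.factorial := by
      rw [Nat.mul_comm, Nat.factorial_mul_descFactorial hsn]
    have hpos : 0 < n.descFactorial s := Nat.pos_of_ne_zero fun h0 =>
      absurd (Nat.descFactorial_eq_zero_iff_lt.mp h0) (not_lt.mpr hsn)
    exact Nat.eq_of_mul_eq_mul_left hpos (by rw [hfin, hfact])
  calc ∑ σ : Equiv.Perm (Fin n), f (g σ)
      = ∑ ι : Fin s ↪ Fin n, ∑ σ ∈ univ.filter fun σ => g σ = ι, f (g σ) := by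
        rw [Finset.sum_fiberwise]
    _ = ∑ ι : Fin s ↪ Fin n, ((n - s).factorial : ℝ) * f ι := by
        refine Finset.sum_congr rfl fun ι _ => ?_
        rw [Finset.sum_congr rfl (fun σ hσ => by
          rw [(Finset.mem_filter.mp hσ).2]), Finset.sum_const, key ι, nsmul_eq_mul]
    _ = ((n - s).factorial : ℝ) * ∑ ι : Fin s ↪ Fin n, f ι := by
        rw [Finset.mul_sum]

/-- Hoeffding's representation of a U-statistic of order `s` from `n`
observations as an average, over all permutations of the sample, of means of `⌊n/s⌋`
kernel evaluations on disjoint blocks. -/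
theorem u_statistic_hoeffding_representation
    {E : Type*} (n s k : ℕ) (hs : 1 ≤ s) (hsn : s ≤ n) (hk : k = n / s)
    (x : Fin n → E) (h : (Fin s → E) → ℝ) :
    ((n.factorial : ℝ) / ((n - s).factorial : ℝ))⁻¹ *
        ∑ ι : Fin s ↪ Fin n, h (fun j => x (ι j))
      = ((n.factorial : ℝ))⁻¹ *
          ∑ σ : Equiv.Perm (Fin n), (k : ℝ)⁻¹ *
            ∑ j : Fin k, h (fun i => x (σ ⟨j.val * s + i.val, by
              have h1 : (j.val + 1) * s ≤ k * s := Nat.mul_le_mul_right s j.isLt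
              have h2 : k * s ≤ n := by rw [hk]; exact Nat.div_mul_le_self n s
              calc j.val * s + i.val < j.val * s + s := Nat.add_lt_add_left i.isLt _
                _ = (j.val + 1) * s := (Nat.succ_mul j.val s).symm
                _ ≤ n := le_trans h1 h2⟩)) := by
  have hblock : ∀ (j : Fin k) (i : Fin s), (j.val * s + i.val) < n := by
    intro j i
    have h1 : (j.val + 1) * s ≤ k * s := Nat.mul_le_mul_right s j.isLt
    have h2 : k * s ≤ n := by rw [hk]; exact Nat.div_mul_le_self n s
    calc j.val * s + i.val < j.val * s + s := Nat.add_lt_add_left i.isLt _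
      _ = (j.val + 1) * s := (Nat.succ_mul j.val s).symm
      _ ≤ n := le_trans h1 h2
  let emb : Fin k → (Fin s ↪ Fin n) := fun j =>
    ⟨fun i => ⟨j.val * s + i.val, hblock j i⟩, by
      intro a b hab
      have : j.val * s + a.val = j.val * s + b.val := congrArg Fin.val hab
      exact Fin.ext (Nat.add_left_cancel this)⟩
  set F : (Fin s ↪ Fin n) → ℝ := fun ι => h (fun i => x (ι i)) with hF
  set S : ℝ := ∑ ι : Fin s ↪ Fin n, h (fun j => x (ι j)) with hS
  have hsum : ∀ j : Fin k,
      ∑ σ : Equiv.Perm (Fin n), F ((emb j).trans σ.toEmbedding)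
        = ((n - s).factorial : ℝ) * S := fun j => perm_sum_comp hsn (emb j) F
  have hk1 : 1 ≤ k := by
    rw [hk]; exact Nat.one_le_div_iff (Nat.lt_of_lt_of_le Nat.zero_lt_one hs) |>.mpr hsn
  have hkne : (k : ℝ) ≠ 0 := Nat.cast_ne_zero.mpr (by omega)
  have hnfne : (n.factorial : ℝ) ≠ 0 := Nat.cast_ne_zero.mpr n.factorial_ne_zero
  have hnsne : ((n - s).factorial : ℝ) ≠ 0 := Nat.cast_ne_zero.mpr (n - s).factorial_ne_zero
  have hrw : ∀ σ : Equiv.Perm (Fin n),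
      (∑ j : Fin k, h (fun i => x (σ ⟨j.val * s + i.val, hblock j i⟩)))
        = ∑ j : Fin k, F ((emb j).trans σ.toEmbedding) := fun σ => rfl
  have hmain : ∑ σ : Equiv.Perm (Fin n), (k : ℝ)⁻¹ *
      ∑ j : Fin k, F ((emb j).trans σ.toEmbedding)
        = ((n - s).factorial : ℝ) * S := by
    rw [← Finset.mul_sum, Finset.sum_comm,
      Finset.sum_congr rfl (fun j _ => hsum j), Finset.sum_const, Finset.card_univ,
      Fintype.card_fin, nsmul_eq_mul, ← mul_assoc, inv_mul_cancel₀ hkne, one_mul]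
  calc ((n.factorial : ℝ) / ((n - s).factorial : ℝ))⁻¹ * S
      = ((n.factorial : ℝ))⁻¹ * (((n - s).factorial : ℝ) * S) := by
        rw [inv_div]; ring
    _ = ((n.factorial : ℝ))⁻¹ * ∑ σ : Equiv.Perm (Fin n), (k : ℝ)⁻¹ *
          ∑ j : Fin k, F ((emb j).trans σ.toEmbedding) := by rw [hmain]
    _ = _ := congrArg _ (Finset.sum_congr rfl fun σ _ => congrArg _ (hrw σ).symm)
end
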